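/- Let d > 1 be an integer and A = (a_0, …, a_k) a normal d-collection with a_k ≠ 0. Let j_1 < j_2 < … < j_s = k be its critical indices (j is critical if j = k or a_j < d − 1), set j_0 = −1, and let A_i be the d-collection consisting of the entries a_t of A with j_{i−1} < t ≤ j_i (and 0 elsewhere). Then every element x of span_d(A) is uniquely representable as x = x_1 + … + x_s where each x_i is a multiple of d^{j_{i−1}+1} lying in {0, d^{j_{i−1}+1}, 2·d^{j_{i−1}+1}, …, sum_d(A_i)}; conversely every such sum lies in span_d(A). -/

import Mathlib

/-- The span of a `d`-collection `A : ℕ →₀ ℕ` (where `A i` is the multiplicity of the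
token `d ^ i`): the set of all sums `∑ i, c i * d ^ i` over sub-collections `c ≤ A`. -/
def dspan (d : ℕ) (A : ℕ →₀ ℕ) : Set ℕ :=
  {n : ℕ | ∃ c : ℕ →₀ ℕ, (∀ i, c i ≤ A i) ∧ n = c.sum (fun i m => m * d ^ i)}

/-- The total sum `∑ i, a_i * d ^ i` of a `d`-collection. -/
def dsum (d : ℕ) (A : ℕ →₀ ℕ) : ℕ := A.sum (fun i m => m * d ^ i)

/-- Elementary exchange at index `i`: replace `d` tokens `d ^ i` by one token `d ^ (i+1)`. -/
noncomputable def exch (d i : ℕ) (A : ℕ →₀ ℕ) : ℕ →₀ ℕ :=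
  A - Finsupp.single i d + Finsupp.single (i + 1) 1

lemma geom_aux (d : ℕ) (hd : 1 ≤ d) (n : ℕ) :
    (d - 1) * ∑ t ∈ Finset.range n, d ^ t + 1 = d ^ n := by
  induction n with
  | zero => simp
  | succ n ih =>
    rw [Finset.sum_range_succ, Nat.mul_add, pow_succ]
    have h1 : (d - 1) * d ^ n + d ^ n = d ^ n * d := by
      rw [Nat.sub_one_mul, mul_comm]
      have : d ^ n ≤ d ^ n * d := Nat.le_mul_of_pos_right _ (by omega)
      omega
    omega

lemma prefix_lt (d : ℕ) (hd : 1 < d) (A : ℕ → ℕ) (m : ℕ)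
    (hA : ∀ t, A t ≤ 2 * (d - 1)) (hm : A m ≤ d - 2) :
    ∑ t ∈ Finset.range (m + 1), A t * d ^ t < d ^ (m + 1) := by
  rw [Finset.sum_range_succ]
  have h1 : ∑ t ∈ Finset.range m, A t * d ^ t
      ≤ ∑ t ∈ Finset.range m, 2 * (d - 1) * d ^ t :=
    Finset.sum_le_sum fun t _ => Nat.mul_le_mul_right _ (hA t)
  have h2 : ∑ t ∈ Finset.range m, 2 * (d - 1) * d ^ t
      = 2 * ((d - 1) * ∑ t ∈ Finset.range m, d ^ t) := by
    simp only [Finset.mul_sum, ← mul_assoc]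
  have h3 := geom_aux d (by omega) m
  have h4 : A m * d ^ m ≤ (d - 2) * d ^ m := Nat.mul_le_mul_right _ hm
  have h5 : (d - 2) * d ^ m + 2 * d ^ m = d * d ^ m := by
    rw [← Nat.add_mul]
    congr 1
    omega
  have h6 : d ^ (m + 1) = d * d ^ m := by rw [pow_succ, mul_comm]
  omega

lemma rep (d : ℕ) (hd : 1 < d) :
    ∀ (T : ℕ) (a : ℕ → ℕ) (y : ℕ), (∀ t < T, d - 1 ≤ a t) →
      y ≤ ∑ t ∈ Finset.range (T + 1), a t * d ^ t →
      ∃ c : ℕ → ℕ, (∀ t, c t ≤ a t) ∧ (∀ t, T < t → c t = 0) ∧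
        y = ∑ t ∈ Finset.range (T + 1), c t * d ^ t := by
  intro T
  induction T with
  | zero =>
    intro a y _ hy
    simp only [zero_add, Finset.sum_range_one, pow_zero, mul_one] at hy
    refine ⟨fun t => if t = 0 then y else 0, ?_, ?_, ?_⟩
    · intro t
      by_cases h : t = 0 <;> simp [h, hy]
    · intro t ht
      have : t ≠ 0 := by omega
      show (if t = 0 then y else 0) = 0
      exact if_neg this
    · simp
  | succ T ih =>
    intro a y hlow hy
    set cT := min (a (T + 1)) (y / d ^ (T + 1)) with hcT
    have hPow : 0 < d ^ (T + 1) := Nat.pow_pos (by omega)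
    have hle : cT * d ^ (T + 1) ≤ y := by
      calc cT * d ^ (T + 1) ≤ y / d ^ (T + 1) * d ^ (T + 1) :=
            Nat.mul_le_mul_right _ (min_le_right _ _)
        _ ≤ y := Nat.div_mul_le_self _ _
    set y' := y - cT * d ^ (T + 1) with hy'
    have hy'le : y' ≤ ∑ t ∈ Finset.range (T + 1), a t * d ^ t := by
      rcases le_or_gt (y / d ^ (T + 1)) (a (T + 1)) with h | h
      · -- cT = y / d^(T+1), y' = y % d^(T+1)
        have hcTeq : cT = y / d ^ (T + 1) := min_eq_right h
        have e1 : cT * d ^ (T + 1) = d ^ (T + 1) * (y / d ^ (T + 1)) := by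
          rw [hcTeq, mul_comm]
        have hmad := Nat.mod_add_div y (d ^ (T + 1))
        have hmlt : y % d ^ (T + 1) < d ^ (T + 1) := Nat.mod_lt _ hPow
        have h1 : y' < d ^ (T + 1) := by omega
        have h2 : ∑ t ∈ Finset.range (T + 1), (d - 1) * d ^ t
            ≤ ∑ t ∈ Finset.range (T + 1), a t * d ^ t :=
          Finset.sum_le_sum fun t ht =>
            Nat.mul_le_mul_right _ (hlow t (by simpa using ht))
        have h3 : (d - 1) * ∑ t ∈ Finset.range (T + 1), d ^ t
            = ∑ t ∈ Finset.range (T + 1), (d - 1) * d ^ t := Finset.mul_sum _ _ _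
        have h4 := geom_aux d (by omega) (T + 1)
        omega
      · have hcTeq : cT = a (T + 1) := min_eq_left (le_of_lt h)
        have e2 : cT * d ^ (T + 1) = a (T + 1) * d ^ (T + 1) := by rw [hcTeq]
        have := Finset.sum_range_succ (fun t => a t * d ^ t) (T + 1)
        omega
    obtain ⟨c', hc'1, hc'2, hc'3⟩ := ih a y' (fun t ht => hlow t (by omega)) hy'le
    refine ⟨fun t => if t = T + 1 then cT else c' t, ?_, ?_, ?_⟩
    · intro t
      by_cases h : t = T + 1
      · subst h
        simp only [if_pos rfl]
        exact min_le_left _ _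
      · simp [h, hc'1 t]
    · intro t ht
      have h : t ≠ T + 1 := by omega
      simp [h, hc'2 t (by omega)]
    · rw [Finset.sum_range_succ]
      have h1 : ∑ t ∈ Finset.range (T + 1),
          (if t = T + 1 then cT else c' t) * d ^ t
          = ∑ t ∈ Finset.range (T + 1), c' t * d ^ t := by
        apply Finset.sum_congr rfl
        intro t ht
        have : t ≠ T + 1 := by
          have := Finset.mem_range.mp ht; omega
        simp [this]
      rw [h1, show (fun t => if t = T + 1 then cT else c' t) (T + 1) = cT from if_pos rfl]
      omega

lemma bmono_le (b : ℕ → ℕ) (s : ℕ) (h : ∀ i < s, b i < b (i + 1)) :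
    ∀ i j, i ≤ j → j ≤ s → b i ≤ b j := by
  intro i j hij hjs
  induction j, hij using Nat.le_induction with
  | base => exact le_refl _
  | succ j hij ih => exact le_trans (ih (by omega)) (le_of_lt (h j (by omega)))

lemma bmono_lt (b : ℕ → ℕ) (s : ℕ) (h : ∀ i < s, b i < b (i + 1)) :
    ∀ i j, i < j → j ≤ s → b i < b j := by
  intro i j hij hjs
  have h1 : b i ≤ b (j - 1) := bmono_le b s h i (j - 1) (by omega) (by omega)
  have h2 : b (j - 1) < b ((j - 1) + 1) := h (j - 1) (by omega)
  have h3 : (j - 1) + 1 = j := by omega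
  rw [h3] at h2
  omega

lemma sum_blocks (g : ℕ → ℕ) (b : ℕ → ℕ) (s : ℕ) (hmono : ∀ i < s, b i < b (i + 1)) :
    ∑ i ∈ Finset.range s, ∑ t ∈ Finset.Ico (b i) (b (i + 1)), g t
      = ∑ t ∈ Finset.Ico (b 0) (b s), g t := by
  induction s with
  | zero => simp
  | succ s ih =>
    rw [Finset.sum_range_succ, ih (fun i hi => hmono i (by omega))]
    exact Finset.sum_Ico_consecutive g
      (bmono_le b (s + 1) hmono 0 s (by omega) (by omega))
      (le_of_lt (hmono s (by omega)))

lemma find_block (b : ℕ → ℕ) (s t : ℕ) (hb0 : b 0 = 0) (ht : t < b s) :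
    ∃ i < s, b i ≤ t ∧ t < b (i + 1) := by
  induction s with
  | zero => omega
  | succ s ih =>
    by_cases h : t < b s
    · obtain ⟨i, hi, h1, h2⟩ := ih h
      exact ⟨i, by omega, h1, h2⟩
    · exact ⟨s, by omega, by omega, ht⟩

lemma shift_sum (d : ℕ) (g : ℕ → ℕ) (m M : ℕ) (hmM : m ≤ M) :
    ∑ t ∈ Finset.Ico m M, g t * d ^ t
      = d ^ m * ∑ u ∈ Finset.range (M - m), g (m + u) * d ^ u := by
  rw [Finset.sum_Ico_eq_sum_range, Finset.mul_sum]
  apply Finset.sum_congr rfl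
  intro u _
  rw [pow_add]
  ring

lemma blockrep (d : ℕ) (hd : 1 < d) (a : ℕ → ℕ) (m M : ℕ) (hmM : m < M)
    (hlow : ∀ t, m ≤ t → t < M - 1 → d - 1 ≤ a t)
    (x : ℕ) (hdvd : d ^ m ∣ x) (hx : x ≤ ∑ t ∈ Finset.Ico m M, a t * d ^ t) :
    ∃ c : ℕ → ℕ, (∀ t, c t ≤ a t) ∧ (∀ t, t < m ∨ M ≤ t → c t = 0) ∧
      x = ∑ t ∈ Finset.Ico m M, c t * d ^ t := by
  obtain ⟨y, hy⟩ := hdvd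
  have hPow : 0 < d ^ m := Nat.pow_pos (by omega)
  have hMm : M - m = (M - m - 1) + 1 := by omega
  set T := M - m - 1 with hT
  have hxsum : x ≤ d ^ m * ∑ u ∈ Finset.range (T + 1), a (m + u) * d ^ u := by
    rw [← hMm, ← shift_sum d a m M (le_of_lt hmM)]
    exact hx
  have hysum : y ≤ ∑ u ∈ Finset.range (T + 1), a (m + u) * d ^ u := by
    rw [hy] at hxsum
    exact Nat.le_of_mul_le_mul_left hxsum hPow
  obtain ⟨c', hc'1, hc'2, hc'3⟩ := rep d hd T (fun u => a (m + u)) y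
    (fun u hu => hlow (m + u) (by omega) (by omega)) hysum
  refine ⟨fun t => if m ≤ t ∧ t < M then c' (t - m) else 0, ?_, ?_, ?_⟩
  · intro t
    by_cases h : m ≤ t ∧ t < M
    · have : m + (t - m) = t := by omega
      calc (if m ≤ t ∧ t < M then c' (t - m) else 0) = c' (t - m) := if_pos h
        _ ≤ a (m + (t - m)) := hc'1 _
        _ = a t := by rw [this]
    · simp [if_neg h]
  · intro t ht
    have h : ¬(m ≤ t ∧ t < M) := by omega
    exact if_neg h
  · have : ∑ t ∈ Finset.Ico m M, (if m ≤ t ∧ t < M then c' (t - m) else 0) * d ^ t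
        = ∑ t ∈ Finset.Ico m M, c' (t - m) * d ^ t := by
      apply Finset.sum_congr rfl
      intro t ht
      rw [Finset.mem_Ico] at ht
      rw [if_pos ht]
    rw [this, shift_sum d (fun t => c' (t - m)) m M (le_of_lt hmM), ← hMm] at *
    simp only [Nat.add_sub_cancel_left] at *
    rw [hy, hc'3]

lemma fsum_eq (d : ℕ) (c : ℕ →₀ ℕ) (N : ℕ) (h : ∀ t, c t ≠ 0 → t < N) :
    c.sum (fun i m => m * d ^ i) = ∑ t ∈ Finset.range N, c t * d ^ t := by
  apply Finsupp.sum_of_support_subset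
  · intro t ht
    rw [Finset.mem_range]
    exact h t (Finsupp.mem_support_iff.mp ht)
  · intros
    simp

lemma dsum_filter (d : ℕ) (A : ℕ →₀ ℕ) (k : ℕ) (hsupp : ∀ t, A t ≠ 0 → t ≤ k)
    (m M : ℕ) (hM : M ≤ k + 1) :
    dsum d (A.filter (fun t => m ≤ t ∧ t < M)) = ∑ t ∈ Finset.Ico m M, A t * d ^ t := by
  classical
  have h1 : dsum d (A.filter (fun t => m ≤ t ∧ t < M))
      = ∑ t ∈ Finset.range (k + 1), (A.filter (fun t => m ≤ t ∧ t < M)) t * d ^ t := by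
    apply fsum_eq
    intro t ht
    have : A t ≠ 0 := by
      rw [Finsupp.filter_apply] at ht
      intro h0
      apply ht
      split <;> simp [h0]
    have := hsupp t this
    omega
  rw [h1]
  have h2 : ∀ t ∈ Finset.range (k + 1),
      (A.filter (fun t => m ≤ t ∧ t < M)) t * d ^ t
        = if m ≤ t ∧ t < M then A t * d ^ t else 0 := by
    intro t _
    rw [Finsupp.filter_apply]
    split <;> simp
  rw [Finset.sum_congr rfl h2, ← Finset.sum_filter]
  apply Finset.sum_congr _ (fun _ _ => rfl)
  ext t
  simp only [Finset.mem_filter, Finset.mem_range, Finset.mem_Ico]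
  omega

/-- Decomposition of a normal `d`-collection along its critical indices.
Here the boundaries `b 0 = 0 < b 1 < … < b s = k + 1` encode `b i = j_i + 1` (with
`j_0 = -1`), the criticality hypothesis says the critical indices are exactly the
`b i - 1` for `1 ≤ i ≤ s`, and the `i`-th part `A_i` (for `0 ≤ i < s`, shifted to
`0`-based indexing) consists of the tokens `d^t` of `A` with `b i ≤ t < b (i+1)`.
Every `x ∈ span_d(A)` is uniquely a sum `x = x_0 + … + x_{s-1}` with `x_i` a multiple
of `d ^ (b i)` not exceeding `sum_d(A_i)`, and conversely every such sum is in the span. -/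
theorem stmt_7 (d : ℕ) (hd : 1 < d) (A : ℕ →₀ ℕ) (k : ℕ)
    (hk : A k ≠ 0) (hsupp : ∀ t, A t ≠ 0 → t ≤ k)
    (hnorm : ∀ t, A t ≤ 2 * (d - 1))
    (s : ℕ) (hs : 0 < s) (b : ℕ → ℕ)
    (hb0 : b 0 = 0) (hbmono : ∀ i < s, b i < b (i + 1)) (hbs : b s = k + 1)
    (hcrit : ∀ t ≤ k, ((t = k ∨ A t < d - 1) ↔ ∃ i, 0 < i ∧ i ≤ s ∧ b i = t + 1)) :
    ∀ x : ℕ,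
      (x ∈ dspan d A ↔ ∃ f : ℕ → ℕ,
        (∀ i < s, d ^ (b i) ∣ f i ∧
          f i ≤ dsum d (A.filter (fun t => b i ≤ t ∧ t < b (i + 1)))) ∧
        x = ∑ i ∈ Finset.range s, f i) ∧
      (∀ f g : ℕ → ℕ,
        (∀ i < s, d ^ (b i) ∣ f i ∧
          f i ≤ dsum d (A.filter (fun t => b i ≤ t ∧ t < b (i + 1)))) →
        (∀ i < s, d ^ (b i) ∣ g i ∧
          g i ≤ dsum d (A.filter (fun t => b i ≤ t ∧ t < b (i + 1)))) →
        (∑ i ∈ Finset.range s, f i) = ∑ i ∈ Finset.range s, g i →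
        ∀ i < s, f i = g i) := by
  classical
  have hble : ∀ i j, i ≤ j → j ≤ s → b i ≤ b j := bmono_le b s hbmono
  have hblt : ∀ i j, i < j → j ≤ s → b i < b j := bmono_lt b s hbmono
  have hbk : ∀ i, i ≤ s → b i ≤ k + 1 := fun i hi => hbs ▸ hble i s hi le_rfl
  have hAsup : ∀ t, A t ≠ 0 → t < k + 1 := fun t h => by have := hsupp t h; omega
  have hdf : ∀ i < s, dsum d (A.filter (fun t => b i ≤ t ∧ t < b (i + 1)))
      = ∑ t ∈ Finset.Ico (b i) (b (i + 1)), A t * d ^ t :=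
    fun i hi => dsum_filter d A k hsupp (b i) (b (i + 1)) (hbk (i + 1) (by omega))
  have hAlow : ∀ i < s, ∀ t, b i ≤ t → t < b (i + 1) - 1 → d - 1 ≤ A t := by
    intro i hi t h1 h2
    have hbik : b (i + 1) ≤ k + 1 := hbk (i + 1) (by omega)
    have htk : t ≤ k := by omega
    by_contra hlt
    push_neg at hlt
    obtain ⟨j, hj0, hjs, hbj⟩ := (hcrit t htk).mp (Or.inr hlt)
    rcases le_or_gt j i with h | h
    · have := hble j i h (by omega); omega
    · have := hble (i + 1) j h hjs; omega
  -- prefix bound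
  have hpre : ∀ j < s, ∀ h : ℕ → ℕ,
      (∀ i < s, d ^ (b i) ∣ h i ∧
        h i ≤ dsum d (A.filter (fun t => b i ≤ t ∧ t < b (i + 1)))) →
      ∑ i ∈ Finset.range j, h i < d ^ (b j) := by
    intro j hjlt h hh
    have h1 : ∑ i ∈ Finset.range j, h i
        ≤ ∑ i ∈ Finset.range j, ∑ t ∈ Finset.Ico (b i) (b (i + 1)), A t * d ^ t := by
      apply Finset.sum_le_sum
      intro i hi
      have hi' : i < s := by have := Finset.mem_range.mp hi; omega
      rw [← hdf i hi']
      exact (hh i hi').2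
    rw [sum_blocks (fun t => A t * d ^ t) b j
      (fun i hi => hbmono i (by omega))] at h1
    rcases Nat.eq_zero_or_pos j with hj0 | hj0
    · subst hj0
      simp only [Finset.range_zero, Finset.sum_empty]
      exact Nat.pow_pos (by omega)
    · have hbj1 : 1 ≤ b j := by have := hblt 0 j hj0 (by omega); omega
      have hbjk : b j ≤ k := by have := hblt j s hjlt le_rfl; omega
      have hk1 : 1 ≤ k := by omega
      set m := b j - 1 with hm
      have htk : m ≤ k := by omega
      have hmk : m ≠ k := by omega
      have hAm : A m ≤ d - 2 := by
        have := (hcrit m htk).mpr ⟨j, hj0, by omega, by omega⟩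
        rcases this with h | h
        · omega
        · omega
      have hplt := prefix_lt d hd (fun t => A t) m hnorm hAm
      have hmb : m + 1 = b j := by omega
      have h2 : ∑ t ∈ Finset.Ico (b 0) (b j), A t * d ^ t < d ^ (b j) := by
        rw [hb0, ← hmb, ← Finset.range_eq_Ico]
        simpa using hplt
      exact lt_of_le_of_lt h1 h2
  intro x
  constructor
  · constructor
    · rintro ⟨c, hc, rfl⟩
      refine ⟨fun i => ∑ t ∈ Finset.Ico (b i) (b (i + 1)), c t * d ^ t, ?_, ?_⟩
      · intro i hi
        constructor
        · apply Finset.dvd_sum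
          intro t ht
          rw [Finset.mem_Ico] at ht
          exact (pow_dvd_pow d ht.1).mul_left _
        · rw [hdf i hi]
          exact Finset.sum_le_sum fun t _ => Nat.mul_le_mul_right _ (hc t)
      · have hcs : ∀ t, c t ≠ 0 → t < k + 1 := by
          intro t ht
          have hA0 : A t ≠ 0 := by
            intro h0
            have := hc t
            omega
          exact hAsup t hA0
        rw [fsum_eq d c (k + 1) hcs]
        have e1 : ∑ t ∈ Finset.range (k + 1), c t * d ^ t
            = ∑ i ∈ Finset.range s, ∑ t ∈ Finset.Ico (b i) (b (i + 1)), c t * d ^ t := by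
          rw [sum_blocks (fun t => c t * d ^ t) b s hbmono, hb0, hbs,
            ← Finset.range_eq_Ico]
        exact e1
    · rintro ⟨f, hf, rfl⟩
      have H : ∀ i, ∃ cc : ℕ → ℕ, i < s →
          ((∀ t, cc t ≤ A t) ∧ (∀ t, t < b i ∨ b (i + 1) ≤ t → cc t = 0) ∧
            f i = ∑ t ∈ Finset.Ico (b i) (b (i + 1)), cc t * d ^ t) := by
        intro i
        by_cases hi : i < s
        · obtain ⟨cc, h1, h2, h3⟩ := blockrep d hd (fun t => A t) (b i) (b (i + 1))
            (hbmono i hi) (fun t ht1 ht2 => hAlow i hi t ht1 ht2) (f i) (hf i hi).1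
            (by rw [← hdf i hi]; exact (hf i hi).2)
          exact ⟨cc, fun _ => ⟨h1, h2, h3⟩⟩
        · exact ⟨fun _ => 0, fun h => absurd h hi⟩
      choose C hC using H
      have hCz : ∀ i < s, ∀ t, t < b i ∨ b (i + 1) ≤ t → C i t = 0 :=
        fun i hi => (hC i hi).2.1
      set cf : ℕ → ℕ := fun t => ∑ i ∈ Finset.range s, C i t with hcf
      have hcfA : ∀ t, cf t ≤ A t := by
        intro t
        by_cases ht : t < b s
        · obtain ⟨i0, hi0, h1, h2⟩ := find_block b s t hb0 ht
          have he : cf t = C i0 t := by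
            apply Finset.sum_eq_single_of_mem i0 (Finset.mem_range.mpr hi0)
            intro j hj hne
            rw [Finset.mem_range] at hj
            apply hCz j hj
            rcases lt_or_gt_of_ne hne with h | h
            · right; have := hble (j + 1) i0 h (by omega); omega
            · left; have := hble (i0 + 1) j h (by omega); omega
          rw [he]
          exact (hC i0 hi0).1 t
        · have he : cf t = 0 := Finset.sum_eq_zero fun i hi => by
            rw [Finset.mem_range] at hi
            apply hCz i hi
            right
            have := hble (i + 1) s (by omega) le_rfl
            omega
          rw [he]
          exact Nat.zero_le _
      have hcfsup : ∀ t, cf t ≠ 0 → t ∈ Finset.range (k + 1) := by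
        intro t hne
        apply Finset.mem_range.mpr
        apply hAsup
        intro h0
        have := hcfA t
        omega
      set cF : ℕ →₀ ℕ := Finsupp.onFinset (Finset.range (k + 1)) cf hcfsup with hcF
      have hcFa : ∀ t, cF t = cf t := fun t => rfl
      refine ⟨cF, fun t => by rw [hcFa t]; exact hcfA t, ?_⟩
      rw [fsum_eq d cF (k + 1) (fun t h => Finset.mem_range.mp (hcfsup t (by rwa [← hcFa t])))]
      have e2 : ∑ t ∈ Finset.range (k + 1), cF t * d ^ t
          = ∑ i ∈ Finset.range s, ∑ t ∈ Finset.range (k + 1), C i t * d ^ t := by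
        rw [← Finset.sum_comm]
        apply Finset.sum_congr rfl
        intro t _
        rw [hcFa t, hcf]
        exact Finset.sum_mul _ _ _
      rw [e2]
      apply Finset.sum_congr rfl
      intro i hi
      rw [Finset.mem_range] at hi
      rw [(hC i hi).2.2]
      have hsub : Finset.Ico (b i) (b (i + 1)) ⊆ Finset.range (k + 1) := by
        intro t ht
        rw [Finset.mem_Ico] at ht
        rw [Finset.mem_range]
        have := hbk (i + 1) (by omega)
        omega
      have hvan : ∀ t ∈ Finset.range (k + 1),
          t ∉ Finset.Ico (b i) (b (i + 1)) → C i t * d ^ t = 0 := by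
        intro t _ ht
        rw [Finset.mem_Ico] at ht
        have : C i t = 0 := hCz i hi t (by omega)
        rw [this, Nat.zero_mul]
      exact Finset.sum_subset hsub hvan
  · intro f g hf hg heq
    suffices H : ∀ j, j ≤ s →
        (∑ i ∈ Finset.range j, f i) = (∑ i ∈ Finset.range j, g i) →
        ∀ i < j, f i = g i by
      exact fun i hi => H s le_rfl heq i hi
    intro j
    induction j with
    | zero => intro _ _ i hi; omega
    | succ j ih =>
      intro hjs hsum i hij
      have hjlt : j < s := by omega
      obtain ⟨qf, hqf⟩ := (hf j hjlt).1
      obtain ⟨qg, hqg⟩ := (hg j hjlt).1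
      have h1 : ∑ i ∈ Finset.range j, f i < d ^ (b j) := hpre j hjlt f hf
      have h2 : ∑ i ∈ Finset.range j, g i < d ^ (b j) := hpre j hjlt g hg
      rw [Finset.sum_range_succ, Finset.sum_range_succ] at hsum
      have hq : qf = qg := by
        by_contra hne
        rcases lt_or_gt_of_ne hne with h | h
        · have h3 : d ^ (b j) * (qf + 1) ≤ d ^ (b j) * qg :=
            Nat.mul_le_mul_left _ (by omega)
          rw [Nat.mul_add, mul_one] at h3
          omega
        · have h3 : d ^ (b j) * (qg + 1) ≤ d ^ (b j) * qf :=
            Nat.mul_le_mul_left _ (by omega)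
          rw [Nat.mul_add, mul_one] at h3
          omega
      have hfg : f j = g j := by rw [hqf, hqg, hq]
      rcases Nat.lt_or_ge i j with h | h
      · exact ih (by omega) (by omega) i h
      · have : i = j := by omega
        rw [this, hfg]
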